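/- Let Y and Z be arbitrary real-valued random variables on a common probability space with cumulative distribution functions F_Y and F_Z. If the random variables F_Y(Y) and F_Z(Z) are independent, then Y and Z are independent. -/

import Mathlib

open MeasureTheory ProbabilityTheory Set

lemma aux_mono (μ : Measure ℝ) [IsProbabilityMeasure μ] :
    Monotone (fun y => (μ (Set.Iic y)).toReal) := fun _ _ hab =>
  ENNReal.toReal_mono (measure_ne_top μ _) (measure_mono (Iic_subset_Iic.mpr hab))

lemma aux_null (μ : Measure ℝ) [IsProbabilityMeasure μ] (t : ℝ) :
    μ ({y | (μ (Set.Iic y)).toReal ≤ (μ (Set.Iic t)).toReal} \ Set.Iic t) = 0 := by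
  set f : ℝ → ℝ := fun y => (μ (Set.Iic y)).toReal with hf
  have hmono := aux_mono μ
  set E := {y | f y ≤ f t} \ Set.Iic t with hE
  have hmem : ∀ y ∈ E, t < y ∧ μ (Set.Iic y) = μ (Set.Iic t) := by
    intro y hy
    obtain ⟨h1, h2⟩ := hy
    have hty : t < y := not_le.mp h2
    refine ⟨hty, ?_⟩
    have : f t ≤ f y := hmono hty.le
    have : f y = f t := le_antisymm h1 this
    exact (ENNReal.toReal_eq_toReal_iff' (measure_ne_top μ _) (measure_ne_top μ _)).mp this
  have hIoc : ∀ y ∈ E, μ (Set.Ioc t y) = 0 := by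
    intro y hy
    obtain ⟨hty, hmeq⟩ := hmem y hy
    have : Set.Ioc t y = Set.Iic y \ Set.Iic t := by
      ext x; simp [Set.mem_Ioc, Set.mem_diff, and_comm]
    rw [this, measure_diff (Iic_subset_Iic.mpr hty.le) measurableSet_Iic.nullMeasurableSet
      (measure_ne_top μ _), hmeq, tsub_self]
  by_cases hmax : ∃ m ∈ E, ∀ y ∈ E, y ≤ m
  · obtain ⟨m, hm, hmax⟩ := hmax
    refine measure_mono_null (fun y hy => ?_) (hIoc m hm)
    exact ⟨(hmem y hy).1, hmax y hy⟩
  · push_neg at hmax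
    have hsub : E ⊆ ⋃ q : {q : ℚ // (q : ℝ) ∈ E}, Set.Ioc t (q : ℝ) := by
      intro x hx
      obtain ⟨y, hyE, hxy⟩ := hmax x hx
      obtain ⟨q, hq1, hq2⟩ := exists_rat_btwn hxy
      have hqE : (q : ℝ) ∈ E := by
        refine ⟨le_trans (hmono hq2.le) ?_, not_le.mpr (lt_trans (hmem x hx).1 hq1)⟩
        exact hyE.1
      exact Set.mem_iUnion.mpr ⟨⟨q, hqE⟩, (hmem x hx).1, hq1.le⟩
    exact measure_mono_null hsub (measure_iUnion_null fun q => hIoc _ q.2)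

theorem stmt3 {Ω : Type*} [MeasurableSpace Ω] (P : Measure Ω) [IsProbabilityMeasure P]
    (Y Z : Ω → ℝ) (hY : Measurable Y) (hZ : Measurable Z)
    (hindep : IndepFun (fun ω => ((P.map Y) (Set.Iic (Y ω))).toReal)
      (fun ω => ((P.map Z) (Set.Iic (Z ω))).toReal) P) :
    IndepFun Y Z P := by
  set μY := P.map Y with hμY
  set μZ := P.map Z with hμZ
  have hPMY : IsProbabilityMeasure μY := Measure.isProbabilityMeasure_map hY.aemeasurable
  have hPMZ : IsProbabilityMeasure μZ := Measure.isProbabilityMeasure_map hZ.aemeasurable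
  set fY : ℝ → ℝ := fun y => (μY (Set.Iic y)).toReal with hfY
  set fZ : ℝ → ℝ := fun y => (μZ (Set.Iic y)).toReal with hfZ
  have hfYmeas : Measurable fY := (aux_mono μY).measurable
  have hfZmeas : Measurable fZ := (aux_mono μZ).measurable
  have key : ∀ (W : Ω → ℝ) (hW : Measurable W) (t : ℝ),
      ((fun ω => ((P.map W) (Set.Iic (W ω))).toReal) ⁻¹'
          Set.Iic (((P.map W) (Set.Iic t)).toReal) : Set Ω) =ᵐ[P] (W ⁻¹' Set.Iic t : Set Ω) := by
    intro W hW t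
    set μW := P.map W with hμW
    have : IsProbabilityMeasure μW := Measure.isProbabilityMeasure_map hW.aemeasurable
    set fW : ℝ → ℝ := fun y => (μW (Set.Iic y)).toReal with hfW
    rw [MeasureTheory.ae_eq_set]
    constructor
    · have heq : (fun ω => fW (W ω)) ⁻¹' Set.Iic (fW t) \ W ⁻¹' Set.Iic t
          = W ⁻¹' ((fW ⁻¹' Set.Iic (fW t)) \ Set.Iic t) := by
        rfl
      have hmeas : MeasurableSet ((fW ⁻¹' Set.Iic (fW t)) \ Set.Iic t) :=
        ((aux_mono μW).measurable measurableSet_Iic).diff measurableSet_Iic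
      rw [heq, ← Measure.map_apply hW hmeas]
      exact aux_null μW t
    · have heq : W ⁻¹' Set.Iic t \ (fun ω => fW (W ω)) ⁻¹' Set.Iic (fW t) = ∅ := by
        rw [Set.diff_eq_empty]
        intro ω hω
        exact aux_mono μW hω
      exact (congrArg P heq).trans measure_empty
  have hpY : IsPiSystem (Set.preimage Y '' Set.range Set.Iic) := isPiSystem_Iic.comap Y
  have hpZ : IsPiSystem (Set.preimage Z '' Set.range Set.Iic) := isPiSystem_Iic.comap Z
  have hgenY : MeasurableSpace.comap Y Real.measurableSpace
      = MeasurableSpace.generateFrom (Set.preimage Y '' Set.range Set.Iic) := by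
    conv_lhs => rw [BorelSpace.measurable_eq (α := ℝ), borel_eq_generateFrom_Iic ℝ]
    exact MeasurableSpace.comap_generateFrom
  have hgenZ : MeasurableSpace.comap Z Real.measurableSpace
      = MeasurableSpace.generateFrom (Set.preimage Z '' Set.range Set.Iic) := by
    conv_lhs => rw [BorelSpace.measurable_eq (α := ℝ), borel_eq_generateFrom_Iic ℝ]
    exact MeasurableSpace.comap_generateFrom
  refine IndepSets.indep hY.comap_le hZ.comap_le hpY hpZ hgenY hgenZ ?_
  rintro s u ⟨sY, ⟨a, rfl⟩, rfl⟩ ⟨sZ, ⟨b, rfl⟩, rfl⟩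
  have h1 := hindep.measure_inter_preimage_eq_mul (Set.Iic (fY a)) (Set.Iic (fZ b))
    measurableSet_Iic measurableSet_Iic
  have hA := key Y hY a
  have hB := key Z hZ b
  rw [measure_congr (hA.inter hB), measure_congr hA, measure_congr hB] at h1
  exact Filter.Eventually.of_forall fun _ => by simpa using h1
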